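/- Monotonicity of the structural function implies monotonicity over potential outcomes (one direction of the paper's theorem relating the monotonicity assumptions, scalar case): Assume almost-sure monotonicity of the structural function over U, i.e. there is a Borel set S ⊆ ℝ with ν Sᶜ = 0 such that either f x is monotone increasing on S for every x ∈ 𝒳, or f x is monotone decreasing on S for every x ∈ 𝒳. Then monotonicity over potential outcomes holds: for all x₀, x₁ ∈ 𝒳 and all y ∈ ℝ, ν {u | f x₀ u < y ∧ y ≤ f x₁ u} = 0 or ν {u | f x₁ u < y ∧ y ≤ f x₀ u} = 0. -/

import Mathlib

open MeasureTheory

/-- Almost-sure monotonicity of the structural function `f_Y(x, ·)` over `U`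
implies monotonicity over the potential outcomes (scalar case). -/
theorem monotonicity_over_structural_function_implies_monotonicity_over_potential_outcomes
    {𝒳 : Type*} (ν : Measure ℝ) [IsProbabilityMeasure ν]
    (f : 𝒳 → ℝ → ℝ) (hf : ∀ x, Measurable (f x))
    (hmono : ∃ S : Set ℝ, MeasurableSet S ∧ ν Sᶜ = 0 ∧
      ((∀ x, MonotoneOn (f x) S) ∨ (∀ x, AntitoneOn (f x) S))) :
    ∀ (x₀ x₁ : 𝒳) (y : ℝ),
      ν {u | f x₀ u < y ∧ y ≤ f x₁ u} = 0 ∨ ν {u | f x₁ u < y ∧ y ≤ f x₀ u} = 0 := by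
  obtain ⟨S, hS, hνS, hcase⟩ := hmono
  intro x₀ x₁ y
  have key : ∀ T : Set ℝ, T ∩ S = ∅ → ν T = 0 := by
    intro T hT
    refine le_antisymm ?_ zero_le
    calc ν T ≤ ν Sᶜ := measure_mono fun u hu huS =>
          Set.eq_empty_iff_forall_notMem.mp hT u ⟨hu, huS⟩
      _ = 0 := hνS
  by_cases hA : ({u | f x₀ u < y ∧ y ≤ f x₁ u} ∩ S).Nonempty
  · right
    apply key
    rw [Set.eq_empty_iff_forall_notMem]
    rintro v ⟨⟨h1, h2⟩, hvS⟩
    obtain ⟨u, ⟨h3, h4⟩, huS⟩ := hA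
    rcases hcase with hm | hm
    · have huv : u < v := lt_of_not_ge fun h =>
        absurd (hm x₀ hvS huS h) (not_le.mpr (h3.trans_le h2))
      have hvu : v < u := lt_of_not_ge fun h =>
        absurd (hm x₁ huS hvS h) (not_le.mpr (h1.trans_le h4))
      exact absurd huv (not_lt.mpr hvu.le)
    · have huv : v < u := lt_of_not_ge fun h =>
        absurd (hm x₀ huS hvS h) (not_le.mpr (h3.trans_le h2))
      have hvu : u < v := lt_of_not_ge fun h =>
        absurd (hm x₁ hvS huS h) (not_le.mpr (h1.trans_le h4))
      exact absurd huv (not_lt.mpr hvu.le)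
  · exact Or.inl (key _ (Set.not_nonempty_iff_eq_empty.mp hA))
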